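/- Let f₁ : [0,1] → ℝ be continuous and nonnegative with ∫₀¹ x f₁(x) dx = 1. Then F₃(1) = 1 + ∫₀¹ x (log x) f₁(x) dx < 1; in particular σ = 1 does not belong to Σ = {σ ∈ ℂ : F₃(σ) = 1}. -/

import Mathlib

open MeasureTheory Set Filter intervalIntegral

theorem stmt10 (f₁ : ℝ → ℝ) (hf₁ : ContinuousOn f₁ (Set.Icc 0 1))
    (hnn : ∀ x ∈ Set.Icc (0:ℝ) 1, 0 ≤ f₁ x)
    (hnorm : ∫ x in (0:ℝ)..1, x * f₁ x = 1) :
    (∫ t in (0:ℝ)..1,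
        (t : ℂ) ^ (1 : ℂ) * ((f₁ t - (1 / t ^ 2) * ∫ x in (0:ℝ)..t, x * f₁ x : ℝ) : ℂ)) =
      ((1 + ∫ x in (0:ℝ)..1, x * Real.log x * f₁ x : ℝ) : ℂ) ∧
    (1 + ∫ x in (0:ℝ)..1, x * Real.log x * f₁ x) < 1 ∧
    (∫ t in (0:ℝ)..1,
        (t : ℂ) ^ (1 : ℂ) * ((f₁ t - (1 / t ^ 2) * ∫ x in (0:ℝ)..t, x * f₁ x : ℝ) : ℂ)) ≠ 1 := by
  set G : ℝ → ℝ := fun t => ∫ x in (0:ℝ)..t, x * f₁ x with hGdef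
  obtain ⟨M, hM⟩ := (isCompact_Icc : IsCompact (Icc (0:ℝ) 1)).exists_bound_of_continuousOn hf₁
  have hM0 : 0 ≤ M := le_trans (norm_nonneg _) (hM 0 (by constructor <;> norm_num))
  have hc : ContinuousOn (fun x => x * f₁ x) (Icc (0:ℝ) 1) := continuousOn_id.mul hf₁
  have hcb : ∀ x ∈ Icc (0:ℝ) 1, |x * f₁ x| ≤ M := by
    intro x hx
    rw [abs_mul]
    calc |x| * |f₁ x| ≤ 1 * M :=
          mul_le_mul (abs_le.mpr ⟨by linarith [hx.1], hx.2⟩) (hM x hx) (abs_nonneg _) zero_le_one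
    _ = M := one_mul M
  have hint : ∀ a b : ℝ, a ∈ Icc (0:ℝ) 1 → b ∈ Icc (0:ℝ) 1 →
      IntervalIntegrable (fun x => x * f₁ x) volume a b := fun a b ha hb =>
    (hc.mono (uIcc_subset_Icc ha hb)).intervalIntegrable
  -- bound on G
  have hGb : ∀ t ∈ Icc (0:ℝ) 1, |G t| ≤ M * t := by
    intro t ht
    have h := intervalIntegral.norm_integral_le_of_norm_le_const (C := M)
      (f := fun x => x * f₁ x) (a := 0) (b := t) (fun x hx => by
        rw [uIoc_of_le ht.1] at hx
        exact hcb x ⟨le_of_lt hx.1, hx.2.trans ht.2⟩)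
    simpa [abs_of_nonneg ht.1] using h
  -- continuity of G
  have hGcont : ContinuousOn G (Icc (0:ℝ) 1) := by
    have := intervalIntegral.continuousOn_primitive_interval (a := 0) (b := 1)
      (f := fun x => x * f₁ x) (μ := volume)
      (by rw [uIcc_of_le (by norm_num : (0:ℝ) ≤ 1)]; exact hc.integrableOn_Icc)
    rwa [uIcc_of_le (by norm_num : (0:ℝ) ≤ 1)] at this
  -- derivative of G on interior
  have hGd : ∀ t ∈ Ioo (0:ℝ) 1, HasDerivAt G (t * f₁ t) t := by
    intro t ht
    have hsm := ContinuousAt.stronglyMeasurableAtFilter (μ := volume) isOpen_Ioo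
      (fun x hx => hc.continuousAt (Icc_mem_nhds hx.1 hx.2)) t ht
    exact intervalIntegral.integral_hasDerivAt_right
      (hint 0 t ⟨le_refl 0, by norm_num⟩ ⟨le_of_lt ht.1, le_of_lt ht.2⟩)
      hsm (hc.continuousAt (Icc_mem_nhds ht.1 ht.2))
  set ψ₁ : ℝ → ℝ := fun t => t⁻¹ * G t with hψ₁def
  set ψ₂ : ℝ → ℝ := fun t => Real.log t * (t * f₁ t) with hψ₂def
  set φ : ℝ → ℝ := fun t => ψ₁ t + ψ₂ t with hφdef
  have hHd : ∀ t ∈ Ioo (0:ℝ) 1, HasDerivAt (fun t => Real.log t * G t) (φ t) t := by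
    intro t ht
    exact (Real.hasDerivAt_log (ne_of_gt ht.1)).mul (hGd t ht)
  -- bounds on pieces
  have hψ₁b : ∀ t ∈ Ioc (0:ℝ) 1, |ψ₁ t| ≤ M := by
    intro t ht
    rw [hψ₁def, abs_mul, abs_inv, abs_of_pos ht.1]
    have h1 : t⁻¹ * |G t| ≤ t⁻¹ * (M * t) :=
      mul_le_mul_of_nonneg_left (hGb t ⟨le_of_lt ht.1, ht.2⟩) (inv_nonneg.mpr (le_of_lt ht.1))
    calc t⁻¹ * |G t| ≤ t⁻¹ * (M * t) := h1
    _ = M := by field_simp [ne_of_gt ht.1]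
  have hψ₂b : ∀ t ∈ Ioc (0:ℝ) 1, |ψ₂ t| ≤ M := by
    intro t ht
    simp only [hψ₂def]
    rw [show Real.log t * (t * f₁ t) = (Real.log t * t) * f₁ t by ring, abs_mul]
    calc |Real.log t * t| * |f₁ t| ≤ 1 * M :=
          mul_le_mul (le_of_lt (Real.abs_log_mul_self_lt t ht.1 ht.2))
            (hM t ⟨le_of_lt ht.1, ht.2⟩) (abs_nonneg _) zero_le_one
    _ = M := one_mul M
  -- measurability
  have hGm : AEStronglyMeasurable G (volume.restrict (Ioc (0:ℝ) 1)) :=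
    (hGcont.mono Ioc_subset_Icc_self).aestronglyMeasurable measurableSet_Ioc
  have hf₁m : AEStronglyMeasurable f₁ (volume.restrict (Ioc (0:ℝ) 1)) :=
    (hf₁.mono Ioc_subset_Icc_self).aestronglyMeasurable measurableSet_Ioc
  have hψ₁m : AEStronglyMeasurable ψ₁ (volume.restrict (Ioc (0:ℝ) 1)) :=
    (measurable_inv.aestronglyMeasurable).mul hGm
  have hψ₂m : AEStronglyMeasurable ψ₂ (volume.restrict (Ioc (0:ℝ) 1)) :=
    (Real.measurable_log.aestronglyMeasurable).mul
      ((measurable_id.aestronglyMeasurable).mul hf₁m)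
  have hconst : ∀ c : ℝ, IntegrableOn (fun _ => c) (Ioc (0:ℝ) 1) volume := by
    intro c
    rw [integrableOn_const_iff]
    right
    rw [Real.volume_Ioc]
    exact ENNReal.ofReal_lt_top
  have hintOn : ∀ (h : ℝ → ℝ), AEStronglyMeasurable h (volume.restrict (Ioc (0:ℝ) 1)) →
      (∀ t ∈ Ioc (0:ℝ) 1, |h t| ≤ M) → IntervalIntegrable h volume 0 1 := by
    intro h hm hb
    rw [intervalIntegrable_iff_integrableOn_Ioc_of_le (by norm_num)]
    exact Integrable.mono' (hconst M) hm
      (by filter_upwards [ae_restrict_mem measurableSet_Ioc] with t ht using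
        (by rw [Real.norm_eq_abs]; exact hb t ht))
  have hψ₁I : IntervalIntegrable ψ₁ volume 0 1 := hintOn ψ₁ hψ₁m hψ₁b
  have hψ₂I : IntervalIntegrable ψ₂ volume 0 1 := hintOn ψ₂ hψ₂m hψ₂b
  have hφI : IntervalIntegrable φ volume 0 1 := hψ₁I.add hψ₂I
  have hφb : ∀ t ∈ Ioc (0:ℝ) 1, |φ t| ≤ M + M := fun t ht =>
    (abs_add_le _ _).trans (add_le_add (hψ₁b t ht) (hψ₂b t ht))
  -- FTC on [ε, 1]
  have key : ∀ ε ∈ Ioo (0:ℝ) 1, (∫ t in ε..(1:ℝ), φ t) = -(Real.log ε * G ε) := by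
    intro ε hε
    have hHc : ContinuousOn (fun t => Real.log t * G t) (Icc ε 1) := by
      apply ContinuousOn.mul
      · exact Real.continuousOn_log.mono (fun x hx => by
          simp only [mem_compl_iff, mem_singleton_iff]
          intro h; rw [h] at hx; exact absurd hx.1 (not_le.mpr hε.1))
      · exact hGcont.mono (Icc_subset_Icc (le_of_lt hε.1) le_rfl)
    have hsub : uIcc ε (1:ℝ) ⊆ uIcc (0:ℝ) 1 := by
      rw [uIcc_of_le (le_of_lt hε.2), uIcc_of_le (by norm_num : (0:ℝ) ≤ 1)]
      exact Icc_subset_Icc (le_of_lt hε.1) le_rfl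
    have h1 := intervalIntegral.integral_eq_sub_of_hasDerivAt_of_le (le_of_lt hε.2)
      hHc (fun x hx => hHd x ⟨lt_trans hε.1 hx.1, hx.2⟩) (hφI.mono_set hsub)
    rw [h1]
    simp [Real.log_one]
  -- splitting and limit
  have hsplit : ∀ ε ∈ Ioo (0:ℝ) 1,
      (∫ t in (0:ℝ)..1, φ t) = (∫ t in (0:ℝ)..ε, φ t) - Real.log ε * G ε := by
    intro ε hε
    have hs1 : uIcc (0:ℝ) ε ⊆ uIcc (0:ℝ) 1 := by
      rw [uIcc_of_le (le_of_lt hε.1), uIcc_of_le (by norm_num : (0:ℝ) ≤ 1)]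
      exact Icc_subset_Icc le_rfl (le_of_lt hε.2)
    have hs2 : uIcc ε (1:ℝ) ⊆ uIcc (0:ℝ) 1 := by
      rw [uIcc_of_le (le_of_lt hε.2), uIcc_of_le (by norm_num : (0:ℝ) ≤ 1)]
      exact Icc_subset_Icc (le_of_lt hε.1) le_rfl
    rw [← intervalIntegral.integral_add_adjacent_intervals (hφI.mono_set hs1) (hφI.mono_set hs2),
      key ε hε]
    ring
  have hφzero : (∫ t in (0:ℝ)..1, φ t) = 0 := by
    have t1 : Tendsto (fun ε => ∫ t in (0:ℝ)..ε, φ t) (nhdsWithin 0 (Ioi 0)) (nhds 0) := by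
      apply squeeze_zero_norm' (a := fun ε => (M + M) * ε)
      · filter_upwards [Ioo_mem_nhdsGT_of_mem (left_mem_Ico.mpr zero_lt_one)] with ε hε
        have := intervalIntegral.norm_integral_le_of_norm_le_const (C := M + M)
          (f := φ) (a := 0) (b := ε) (fun x hx => by
            rw [uIoc_of_le (le_of_lt hε.1)] at hx
            rw [Real.norm_eq_abs]
            exact hφb x ⟨hx.1, hx.2.trans (le_of_lt hε.2)⟩)
        calc ‖∫ t in (0:ℝ)..ε, φ t‖ ≤ (M + M) * |ε - 0| := this
        _ = (M + M) * ε := by rw [sub_zero, abs_of_pos hε.1]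
      · have : Tendsto (fun ε : ℝ => (M + M) * ε) (nhds 0) (nhds ((M + M) * 0)) :=
          (continuous_const.mul continuous_id).tendsto 0
        rw [mul_zero] at this
        exact this.mono_left nhdsWithin_le_nhds
    have t2 : Tendsto (fun ε => Real.log ε * G ε) (nhdsWithin 0 (Ioi 0)) (nhds 0) := by
      apply squeeze_zero_norm' (a := fun ε => M * |Real.log ε * ε|)
      · filter_upwards [Ioo_mem_nhdsGT_of_mem (left_mem_Ico.mpr zero_lt_one)] with ε hε
        rw [Real.norm_eq_abs, abs_mul]
        calc |Real.log ε| * |G ε| ≤ |Real.log ε| * (M * ε) :=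
              mul_le_mul_of_nonneg_left (hGb ε ⟨le_of_lt hε.1, le_of_lt hε.2⟩) (abs_nonneg _)
        _ = M * (|Real.log ε| * ε) := by ring
        _ = M * |Real.log ε * ε| := by rw [abs_mul, abs_of_pos hε.1]
      · have hl : Tendsto (fun x : ℝ => Real.log x * x) (nhdsWithin 0 (Ioi 0)) (nhds 0) := by
          have := tendsto_log_mul_rpow_nhdsGT_zero (r := 1) zero_lt_one
          simpa [Real.rpow_one] using this
        have := (continuous_abs.tendsto 0).comp hl
        rw [abs_zero] at this
        have := (tendsto_const_nhds (x := M)).mul this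
        rw [mul_zero] at this
        exact this
    have t3 : Tendsto (fun ε => (∫ t in (0:ℝ)..ε, φ t) - Real.log ε * G ε)
        (nhdsWithin 0 (Ioi 0)) (nhds 0) := by simpa using t1.sub t2
    have t4 : Tendsto (fun _ : ℝ => (∫ t in (0:ℝ)..1, φ t)) (nhdsWithin 0 (Ioi 0))
        (nhds 0) := by
      apply t3.congr'
      filter_upwards [Ioo_mem_nhdsGT_of_mem (left_mem_Ico.mpr zero_lt_one)] with ε hε
      exact (hsplit ε hε).symm
    exact (tendsto_nhds_unique t4 tendsto_const_nhds).symm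
  have hψeq : (∫ t in (0:ℝ)..1, ψ₁ t) = -(∫ t in (0:ℝ)..1, ψ₂ t) := by
    have := intervalIntegral.integral_add hψ₁I hψ₂I
    rw [hφdef] at hφzero
    rw [intervalIntegral.integral_congr (g := fun t => ψ₁ t + ψ₂ t) (fun t _ => rfl)] at hφzero
    rw [this] at hφzero
    linarith
  -- ψ₂ integral equals the stated log integral
  have hψ₂eq : (∫ t in (0:ℝ)..1, ψ₂ t) = ∫ x in (0:ℝ)..1, x * Real.log x * f₁ x :=
    intervalIntegral.integral_congr (fun t _ => by rw [hψ₂def]; ring)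
  -- main real computation
  have hmain : (∫ t in (0:ℝ)..1, t * (f₁ t - (1 / t ^ 2) * G t)) =
      1 + ∫ x in (0:ℝ)..1, x * Real.log x * f₁ x := by
    have e1 : (∫ t in (0:ℝ)..1, t * (f₁ t - (1 / t ^ 2) * G t)) =
        ∫ t in (0:ℝ)..1, (t * f₁ t - ψ₁ t) := by
      apply intervalIntegral.integral_congr_ae
      apply Filter.Eventually.of_forall
      intro t ht
      rw [uIoc_of_le (by norm_num : (0:ℝ) ≤ 1)] at ht
      rw [hψ₁def]
      have htne : t ≠ 0 := ne_of_gt ht.1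
      field_simp
    rw [e1, intervalIntegral.integral_sub (hint 0 1 (by constructor <;> norm_num)
      (by constructor <;> norm_num)) hψ₁I, hnorm, hψeq, hψ₂eq]
    ring
  -- strict inequality
  have hneg : (∫ x in (0:ℝ)..1, x * Real.log x * f₁ x) < 0 := by
    by_contra hcon
    push_neg at hcon
    set g : ℝ → ℝ := fun x => -(x * Real.log x * f₁ x) with hgdef
    have hgc : ContinuousOn g (Icc (0:ℝ) 1) :=
      ((Real.continuous_mul_log.continuousOn).mul hf₁).neg
    have hgint : IntegrableOn g (Ioc (0:ℝ) 1) volume :=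
      (hgc.integrableOn_Icc).mono_set Ioc_subset_Icc_self
    have hgnn : 0 ≤ᶠ[ae (volume.restrict (Ioc (0:ℝ) 1))] g := by
      filter_upwards [ae_restrict_mem measurableSet_Ioc] with x hx
      simp only [hgdef, Pi.zero_apply, neg_nonneg]
      have h1 : x * Real.log x ≤ 0 :=
        mul_nonpos_iff.mpr (Or.inl ⟨le_of_lt hx.1, Real.log_nonpos (le_of_lt hx.1) hx.2⟩)
      exact mul_nonpos_iff.mpr (Or.inr ⟨h1, hnn x ⟨le_of_lt hx.1, hx.2⟩⟩)
    have hJg : (∫ x in Ioc (0:ℝ) 1, g x) = -(∫ x in (0:ℝ)..1, x * Real.log x * f₁ x) := by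
      rw [intervalIntegral.integral_of_le (by norm_num : (0:ℝ) ≤ 1),
        ← MeasureTheory.integral_neg]
    have hg0 : g =ᶠ[ae (volume.restrict (Ioc (0:ℝ) 1))] 0 := by
      rw [← MeasureTheory.integral_eq_zero_iff_of_nonneg_ae hgnn hgint]
      have hnonneg : 0 ≤ ∫ x in Ioc (0:ℝ) 1, g x := integral_nonneg_of_ae hgnn
      rw [hJg] at hnonneg ⊢
      linarith
    have hne1 : ∀ᵐ x ∂(volume.restrict (Ioc (0:ℝ) 1)), x ≠ 1 := by
      rw [ae_iff]
      have hs : {x : ℝ | ¬ x ≠ 1} = {1} := by ext x; simp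
      rw [hs, Measure.restrict_apply (measurableSet_singleton 1)]
      exact measure_mono_null inter_subset_left Real.volume_singleton
    have hae : (fun x => x * f₁ x) =ᶠ[ae (volume.restrict (Ioc (0:ℝ) 1))] 0 := by
      filter_upwards [hg0, ae_restrict_mem measurableSet_Ioc, hne1] with x h0 hx hne
      simp only [hgdef, Pi.zero_apply, neg_eq_zero] at h0
      simp only [Pi.zero_apply]
      have hlog : Real.log x < 0 := Real.log_neg hx.1 (lt_of_le_of_ne hx.2 hne)
      have hxlog : x * Real.log x ≠ 0 := ne_of_lt (mul_neg_of_pos_of_neg hx.1 hlog)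
      rcases mul_eq_zero.mp h0 with h | h
      · exact absurd h hxlog
      · rw [h, mul_zero]
    have : (∫ x in (0:ℝ)..1, x * f₁ x) = 0 := by
      rw [intervalIntegral.integral_of_le (by norm_num : (0:ℝ) ≤ 1)]
      exact MeasureTheory.integral_eq_zero_of_ae hae
    rw [hnorm] at this
    norm_num at this
  -- complex reduction
  have hC : (∫ t in (0:ℝ)..1, (t : ℂ) ^ (1 : ℂ) * ((f₁ t - (1 / t ^ 2) * G t : ℝ) : ℂ)) =
      (((∫ t in (0:ℝ)..1, t * (f₁ t - (1 / t ^ 2) * G t)) : ℝ) : ℂ) := by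
    rw [← intervalIntegral.integral_ofReal]
    apply intervalIntegral.integral_congr
    intro t _
    simp only [Complex.cpow_one]
    push_cast
    ring
  refine ⟨?_, by linarith, ?_⟩
  · rw [hC, hmain]
  · rw [hC, hmain]
    intro h
    rw [show ((1:ℂ)) = ((1:ℝ):ℂ) by norm_num] at h
    have := Complex.ofReal_inj.mp h
    linarith
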